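/- Let Λ⊕Γ = {(W_j ⊕ V_j, Λ_j ⊕ Γ_j, v_j)}_{j∈J} be a g-fusion frame for H ⊕ X with bounds A₁, B₁ and frame operator S = S_{Λ⊕Γ}. Then Δ = {(S^{-1}(W_j⊕V_j), (Λ_j⊕Γ_j) P_{W_j⊕V_j} S^{-1}, v_j)}_{j∈J} is a g-fusion frame for H ⊕ X with lower bound B₁^{-1}, and the frame operator of Δ equals S^{-1}. -/

import Mathlib

open ContinuousLinearMap

noncomputable def proj {E : Type*} [NormedAddCommGroup E] [InnerProductSpace ℂ E]
    (W : Submodule ℂ E) [CompleteSpace W] : E →L[ℂ] E :=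
  W.subtypeL.comp W.orthogonalProjection

noncomputable def projOp {E : Type*} [NormedAddCommGroup E] [InnerProductSpace ℂ E]
    [CompleteSpace E] (W : Submodule ℂ E) : E →L[ℂ] E :=
  haveI : CompleteSpace W.topologicalClosure := W.isClosed_topologicalClosure.completeSpace_coe
  W.topologicalClosure.subtypeL.comp W.topologicalClosure.orthogonalProjection

/-- The operator U ⊕ V acting between ℓ²-direct sums of two Hilbert spaces. -/
noncomputable def oplus {E F E' F' : Type*} [NormedAddCommGroup E] [NormedSpace ℂ E]
    [NormedAddCommGroup F] [NormedSpace ℂ F] [NormedAddCommGroup E'] [NormedSpace ℂ E']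
    [NormedAddCommGroup F'] [NormedSpace ℂ F']
    (A : E →L[ℂ] E') (B : F →L[ℂ] F') : WithLp 2 (E × F) →L[ℂ] WithLp 2 (E' × F') :=
  ((WithLp.prodContinuousLinearEquiv 2 ℂ E' F').symm.toContinuousLinearMap).comp
    ((A.prodMap B).comp (WithLp.prodContinuousLinearEquiv 2 ℂ E F).toContinuousLinearMap)

/-- The subspace W ⊕ V of the ℓ²-direct sum. -/
noncomputable def prodSub {E F : Type*} [NormedAddCommGroup E] [NormedSpace ℂ E]
    [NormedAddCommGroup F] [NormedSpace ℂ F] (W : Submodule ℂ E) (V : Submodule ℂ F) :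
    Submodule ℂ (WithLp 2 (E × F)) :=
  (W.prod V).map (WithLp.prodContinuousLinearEquiv 2 ℂ E F).symm.toContinuousLinearMap.toLinearMap

section Aux

lemma gfd_projOp_eq_self {E : Type*} [NormedAddCommGroup E] [InnerProductSpace ℂ E]
    [CompleteSpace E] {M : Submodule ℂ E} {x : E} (hx : x ∈ M.topologicalClosure) :
    projOp M x = x := by
  haveI : CompleteSpace M.topologicalClosure := M.isClosed_topologicalClosure.completeSpace_coe
  show M.topologicalClosure.starProjection x = x
  exact Submodule.starProjection_eq_self_iff.2 hx

lemma gfd_sub_projOp_mem {E : Type*} [NormedAddCommGroup E] [InnerProductSpace ℂ E]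
    [CompleteSpace E] (M : Submodule ℂ E) (u : E) : u - projOp M u ∈ M.topologicalClosureᗮ := by
  haveI : CompleteSpace M.topologicalClosure := M.isClosed_topologicalClosure.completeSpace_coe
  exact Submodule.sub_starProjection_mem_orthogonal (K := M.topologicalClosure) u

lemma gfd_closed_map_equiv {E : Type*} [NormedAddCommGroup E] [InnerProductSpace ℂ E]
    {F : Type*} [NormedAddCommGroup F] [InnerProductSpace ℂ F]
    (e : E ≃L[ℂ] F) (M : Submodule ℂ E) (h : IsClosed (M : Set E)) :
    IsClosed ((M.map e.toContinuousLinearMap.toLinearMap : Submodule ℂ F) : Set F) := by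
  have := e.toHomeomorph.isClosedMap _ h
  simpa [Submodule.map_coe] using this

lemma gfd_mem_prodSub {E F : Type*} [NormedAddCommGroup E] [InnerProductSpace ℂ E]
    [NormedAddCommGroup F] [InnerProductSpace ℂ F]
    {W : Submodule ℂ E} {V : Submodule ℂ F} {u : WithLp 2 (E × F)} :
    u ∈ prodSub W V ↔ u.fst ∈ W ∧ u.snd ∈ V := by
  constructor
  · intro h; obtain ⟨⟨a, b⟩, ⟨h1, h2⟩, rfl⟩ := Submodule.mem_map.1 h; exact ⟨h1, h2⟩
  · rintro ⟨h1, h2⟩; exact Submodule.mem_map.2 ⟨(u.fst, u.snd), ⟨h1, h2⟩, rfl⟩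

variable {E F : Type*} [NormedAddCommGroup E] [InnerProductSpace ℂ E]
  [NormedAddCommGroup F] [InnerProductSpace ℂ F]

lemma gfd_inner_P (W : Submodule ℂ E) [CompleteSpace W] (V : Submodule ℂ F) [CompleteSpace V]
    (u w : WithLp 2 (E × F)) :
    inner (𝕜 := ℂ) (oplus (_root_.proj W) (_root_.proj V) u) w
      = inner (𝕜 := ℂ) u (oplus (_root_.proj W) (_root_.proj V) w) := by
  show inner (𝕜 := ℂ) (_root_.proj W u.fst) w.fst + inner (𝕜 := ℂ) (_root_.proj V u.snd) w.snd
    = inner (𝕜 := ℂ) u.fst (_root_.proj W w.fst) + inner (𝕜 := ℂ) u.snd (_root_.proj V w.snd)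
  congr 1
  · exact Submodule.inner_starProjection_left_eq_right W u.fst w.fst
  · exact Submodule.inner_starProjection_left_eq_right V u.snd w.snd

lemma gfd_P_mem (W : Submodule ℂ E) [CompleteSpace W] (V : Submodule ℂ F) [CompleteSpace V]
    (u : WithLp 2 (E × F)) : oplus (_root_.proj W) (_root_.proj V) u ∈ prodSub W V := by
  rw [gfd_mem_prodSub]
  exact ⟨(W.orthogonalProjection u.fst).2, (V.orthogonalProjection u.snd).2⟩

lemma gfd_P_zero (W : Submodule ℂ E) [CompleteSpace W] (V : Submodule ℂ F) [CompleteSpace V]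
    {u : WithLp 2 (E × F)} (h : u ∈ (prodSub W V)ᗮ) :
    oplus (_root_.proj W) (_root_.proj V) u = 0 := by
  have h1 : u.fst ∈ Wᗮ := by
    intro w hw
    have := h ((WithLp.prodContinuousLinearEquiv 2 ℂ E F).symm (w, 0))
      (gfd_mem_prodSub.2 ⟨hw, V.zero_mem⟩)
    simpa [WithLp.prod_inner_apply] using this
  have h2 : u.snd ∈ Vᗮ := by
    intro w hw
    have := h ((WithLp.prodContinuousLinearEquiv 2 ℂ E F).symm (0, w))
      (gfd_mem_prodSub.2 ⟨W.zero_mem, hw⟩)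
    simpa [WithLp.prod_inner_apply] using this
  have e1 : _root_.proj W u.fst = 0 := by
    simp [_root_.proj, Submodule.orthogonalProjectionOnto_apply_of_mem_orthogonal h1]
  have e2 : _root_.proj V u.snd = 0 := by
    simp [_root_.proj, Submodule.orthogonalProjectionOnto_apply_of_mem_orthogonal h2]
  show (WithLp.prodContinuousLinearEquiv 2 ℂ E F).symm (_root_.proj W u.fst, _root_.proj V u.snd) = 0
  rw [e1, e2]; simp

lemma gfd_prodSub_isClosed (W : Submodule ℂ E) [CompleteSpace W] (V : Submodule ℂ F)
    [CompleteSpace V] : IsClosed ((prodSub W V : Submodule ℂ (WithLp 2 (E × F))) : Set (WithLp 2 (E × F))) := by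
  have hW : IsClosed (W : Set E) := (completeSpace_coe_iff_isComplete.1 ‹_›).isClosed
  have hV : IsClosed (V : Set F) := (completeSpace_coe_iff_isComplete.1 ‹_›).isClosed
  have hprod : IsClosed ((W.prod V : Submodule ℂ (E × F)) : Set (E × F)) := by
    have : ((W.prod V : Submodule ℂ (E × F)) : Set (E × F)) = (W : Set E) ×ˢ (V : Set F) := rfl
    rw [this]; exact hW.prod hV
  have h2 := (WithLp.prodContinuousLinearEquiv 2 ℂ E F).symm.toHomeomorph.isClosedMap _ hprod
  have h3 : ((prodSub W V : Submodule ℂ (WithLp 2 (E × F))) : Set (WithLp 2 (E × F)))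
      = (WithLp.prodContinuousLinearEquiv 2 ℂ E F).symm.toHomeomorph ''
        ((W.prod V : Submodule ℂ (E × F)) : Set (E × F)) := rfl
  rw [h3]; exact h2

end Aux

section Main

variable {ι H : Type*} [NormedAddCommGroup H] [InnerProductSpace ℂ H] [CompleteSpace H]
  {K : ι → Type*} [∀ j, NormedAddCommGroup (K j)] [∀ j, InnerProductSpace ℂ (K j)]
  [∀ j, CompleteSpace (K j)]


variable {ι H : Type*} [NormedAddCommGroup H] [InnerProductSpace ℂ H] [CompleteSpace H]
  {K : ι → Type*} [∀ j, NormedAddCommGroup (K j)] [∀ j, InnerProductSpace ℂ (K j)]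
  [∀ j, CompleteSpace (K j)]


theorem gfd_main
    (v : ι → ℝ) (T : ∀ j, H →L[ℂ] K j) (P : ι → (H →L[ℂ] H)) (N : ι → Submodule ℂ H)
    (hP1 : ∀ j (u w : H), inner (𝕜 := ℂ) (P j u) w = inner (𝕜 := ℂ) u (P j w))
    (hP2 : ∀ j (u : H), P j u ∈ N j)
    (hP3 : ∀ j (u : H), u ∈ (N j)ᗮ → P j u = 0)
    (hN : ∀ j, IsClosed ((N j : Set H)))
    (A₁ B₁ : ℝ) (hA₁ : 0 < A₁) (hAB : A₁ ≤ B₁)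
    (hframe : ∀ u : H, Summable (fun j => (v j) ^ 2 * ‖T j (P j u)‖ ^ 2) ∧
      A₁ * ‖u‖ ^ 2 ≤ ∑' j, (v j) ^ 2 * ‖T j (P j u)‖ ^ 2 ∧
      ∑' j, (v j) ^ 2 * ‖T j (P j u)‖ ^ 2 ≤ B₁ * ‖u‖ ^ 2)
    (S : H ≃L[ℂ] H)
    (hS : ∀ u : H, HasSum
      (fun j => (v j) ^ 2 • P j (ContinuousLinearMap.adjoint (T j) (T j (P j u)))) (S u)) :
    (∃ B' > (0 : ℝ), ∀ u : H,
      Summable (fun j => (v j) ^ 2 *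
        ‖T j (P j (S.symm (projOp ((N j).map S.symm.toContinuousLinearMap.toLinearMap) u)))‖ ^ 2) ∧
      B₁⁻¹ * ‖u‖ ^ 2 ≤ ∑' j, (v j) ^ 2 *
        ‖T j (P j (S.symm (projOp ((N j).map S.symm.toContinuousLinearMap.toLinearMap) u)))‖ ^ 2 ∧
      ∑' j, (v j) ^ 2 *
        ‖T j (P j (S.symm (projOp ((N j).map S.symm.toContinuousLinearMap.toLinearMap) u)))‖ ^ 2 ≤
        B' * ‖u‖ ^ 2) ∧
    ∀ u : H, HasSum
      (fun j => (v j) ^ 2 • projOp ((N j).map S.symm.toContinuousLinearMap.toLinearMap)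
        (ContinuousLinearMap.adjoint
          ((T j).comp ((P j).comp S.symm.toContinuousLinearMap))
          (T j (P j (S.symm (projOp ((N j).map S.symm.toContinuousLinearMap.toLinearMap) u))))))
      (S.symm u) := by
  have hB₁ : (0:ℝ) < B₁ := lt_of_lt_of_le hA₁ hAB
  have hsmulconj : ∀ (r : ℝ) (z : ℂ), (starRingEnd ℂ) (r • z) = r • (starRingEnd ℂ) z := by
    intro r z
    rw [starRingEnd_apply, starRingEnd_apply, star_smul, star_trivial]
  have hQuad : ∀ u w : H, HasSum
      (fun j => (v j) ^ 2 • inner (𝕜 := ℂ) (T j (P j w)) (T j (P j u)))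
      (inner (𝕜 := ℂ) w (S u)) := by
    intro u w
    have h := (hS u).mapL (innerSL ℂ w)
    convert h using 2 with j
    case e'_3 => rfl
    rw [ContinuousLinearMap.map_smul_of_tower, innerSL_apply_apply, ← hP1, adjoint_inner_right]
    rfl
  have hsa : ∀ u w : H, inner (𝕜 := ℂ) (S u) w = inner (𝕜 := ℂ) u (S w) := by
    intro u w
    have h1 := hQuad u w
    have h2 := hQuad w u
    have h3 := Complex.hasSum_conj'.2 h1
    have he : (fun j => (starRingEnd ℂ)
        ((v j) ^ 2 • inner (𝕜 := ℂ) (T j (P j w)) (T j (P j u))))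
        = fun j => (v j) ^ 2 • inner (𝕜 := ℂ) (T j (P j u)) (T j (P j w)) := by
      funext j
      rw [hsmulconj, inner_conj_symm]
    rw [he] at h3
    rw [← inner_conj_symm]
    exact h3.unique h2
  have hRe : ∀ u : H, HasSum (fun j => (v j) ^ 2 * ‖T j (P j u)‖ ^ 2)
      ((inner (𝕜 := ℂ) u (S u)).re) := by
    intro u
    have h := (hQuad u u).mapL Complex.reCLM
    convert h using 2 with j
    rw [map_smul]
    have h5 : Complex.reCLM (inner (𝕜 := ℂ) (T j (P j u)) (T j (P j u)))
        = ‖T j (P j u)‖ ^ 2 := inner_self_eq_norm_sq (𝕜 := ℂ) _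
    rw [h5, smul_eq_mul]
    rfl
  have hbound : ∀ u : H, A₁ * ‖u‖ ^ 2 ≤ (inner (𝕜 := ℂ) u (S u)).re ∧
      (inner (𝕜 := ℂ) u (S u)).re ≤ B₁ * ‖u‖ ^ 2 := by
    intro u
    rw [← (hRe u).tsum_eq]
    exact (hframe u).2
  have hpos : ∀ u : H, 0 ≤ (inner (𝕜 := ℂ) u (S u)).re := by
    intro u
    exact le_trans (by positivity) (hbound u).1
  have hsyminner : ∀ u w : H, inner (𝕜 := ℂ) (S.symm u) w = inner (𝕜 := ℂ) u (S.symm w) := by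
    intro u w
    calc inner (𝕜 := ℂ) (S.symm u) w = inner (𝕜 := ℂ) (S.symm u) (S (S.symm w)) := by
          rw [S.apply_symm_apply]
      _ = inner (𝕜 := ℂ) (S (S.symm u)) (S.symm w) := (hsa _ _).symm
      _ = inner (𝕜 := ℂ) u (S.symm w) := by rw [S.apply_symm_apply]
  have hMc : ∀ j, IsClosed (((N j).map S.symm.toContinuousLinearMap.toLinearMap : Submodule ℂ H) : Set H) := by
    intro j
    have h2 := S.symm.toHomeomorph.isClosedMap _ (hN j)
    have h3 : (((N j).map S.symm.toContinuousLinearMap.toLinearMap : Submodule ℂ H) : Set H)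
        = S.symm.toHomeomorph '' ((N j : Set H)) := rfl
    rw [h3]; exact h2
  have htc : ∀ j, ((N j).map S.symm.toContinuousLinearMap.toLinearMap).topologicalClosure
      = (N j).map S.symm.toContinuousLinearMap.toLinearMap := fun j => (hMc j).submodule_topologicalClosure_eq
  have hK : ∀ j (u : H),
      P j (S.symm (projOp ((N j).map S.symm.toContinuousLinearMap.toLinearMap) u)) = P j (S.symm u) := by
    intro j u
    have hd : u - projOp ((N j).map S.symm.toContinuousLinearMap.toLinearMap) u
        ∈ ((N j).map S.symm.toContinuousLinearMap.toLinearMap)ᗮ := by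
      haveI : CompleteSpace ((N j).map S.symm.toContinuousLinearMap.toLinearMap).topologicalClosure :=
        ((N j).map S.symm.toContinuousLinearMap.toLinearMap).isClosed_topologicalClosure.completeSpace_coe
      have h6 := Submodule.sub_starProjection_mem_orthogonal
        (K := ((N j).map S.symm.toContinuousLinearMap.toLinearMap).topologicalClosure) u
      exact Submodule.orthogonal_le
        (Submodule.le_topologicalClosure ((N j).map S.symm.toContinuousLinearMap.toLinearMap)) h6
    have h0 : P j (S.symm (u - projOp ((N j).map S.symm.toContinuousLinearMap.toLinearMap) u)) = 0 := by
      apply hP3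
      rw [Submodule.mem_orthogonal]
      intro p hp
      rw [← inner_conj_symm, hsyminner]
      have h7 : inner (𝕜 := ℂ) (u - projOp ((N j).map S.symm.toContinuousLinearMap.toLinearMap) u)
          (S.symm p) = 0 :=
        (Submodule.mem_orthogonal' _ _).1 hd _ ⟨p, hp, rfl⟩
      rw [h7, map_zero]
    have hsub : P j (S.symm u)
        - P j (S.symm (projOp ((N j).map S.symm.toContinuousLinearMap.toLinearMap) u)) = 0 := by
      rw [← map_sub (P j), ← map_sub S.symm]
      exact h0
    exact (sub_eq_zero.mp hsub).symm
  have hK2 : ∀ j (z : H),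
      projOp ((N j).map S.symm.toContinuousLinearMap.toLinearMap) (S.symm (P j z)) = S.symm (P j z) := by
    intro j z
    haveI : CompleteSpace ((N j).map S.symm.toContinuousLinearMap.toLinearMap).topologicalClosure :=
      ((N j).map S.symm.toContinuousLinearMap.toLinearMap).isClosed_topologicalClosure.completeSpace_coe
    show ((N j).map S.symm.toContinuousLinearMap.toLinearMap).topologicalClosure.starProjection (S.symm (P j z)) = S.symm (P j z)
    apply Submodule.starProjection_eq_self_iff.2
    rw [htc j]
    exact ⟨P j z, hP2 j z, rfl⟩
  constructor
  · refine ⟨‖(S.symm : H →L[ℂ] H)‖ + 1, by positivity, fun u => ?_⟩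
    simp only [hK]
    have ht : ∑' j, (v j) ^ 2 * ‖T j (P j (S.symm u))‖ ^ 2
        = (inner (𝕜 := ℂ) (S.symm u) u).re := by
      rw [(hRe (S.symm u)).tsum_eq, S.apply_symm_apply]
    refine ⟨(hframe (S.symm u)).1, ?_, ?_⟩
    · rw [ht]
      rcases eq_or_ne u 0 with rfl | hu
      · simp
      · have hn : (0:ℝ) < ‖u‖ := norm_pos_iff.2 hu
        have hd := hbound u
        have hdpos : 0 < (inner (𝕜 := ℂ) u (S u)).re :=
          lt_of_lt_of_le (by positivity) hd.1
        set d := (inner (𝕜 := ℂ) u (S u)).re with hdd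
        set x := S.symm u with hx
        set c : ℝ := ‖u‖ ^ 2 / d with hc
        have hw := hpos (x - (c : ℂ) • u)
        have hSw : S (x - (c : ℂ) • u) = u - (c : ℂ) • S u := by
          rw [map_sub, map_smul, hx, S.apply_symm_apply]
        have hxu : inner (𝕜 := ℂ) x (S u) = inner (𝕜 := ℂ) u u := by
          rw [← hsa, hx, S.apply_symm_apply]
        have huure : (inner (𝕜 := ℂ) u u).re = ‖u‖ ^ 2 := inner_self_eq_norm_sq (𝕜 := ℂ) u
        have huuim : (inner (𝕜 := ℂ) u u).im = 0 := inner_self_im (𝕜 := ℂ) u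
        have hexp : (inner (𝕜 := ℂ) (x - (c : ℂ) • u) (S (x - (c : ℂ) • u))).re
            = (inner (𝕜 := ℂ) x u).re - 2 * c * ‖u‖ ^ 2 + c ^ 2 * d := by
          rw [hSw, inner_sub_left, inner_sub_right, inner_sub_right,
            inner_smul_left, inner_smul_right, inner_smul_left, inner_smul_right, hxu]
          simp only [Complex.sub_re, Complex.mul_re, Complex.conj_ofReal,
            Complex.ofReal_re, Complex.ofReal_im, huure, huuim, ← hdd]
          ring
        rw [hexp] at hw
        have h1 : ‖u‖ ^ 2 * ‖u‖ ^ 2 / d ≤ (inner (𝕜 := ℂ) x u).re := by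
          have e1 : c ^ 2 * d = ‖u‖ ^ 2 * ‖u‖ ^ 2 / d := by
            rw [hc]; field_simp
          have e2 : 2 * c * ‖u‖ ^ 2 = 2 * (‖u‖ ^ 2 * ‖u‖ ^ 2 / d) := by
            rw [hc]; ring
          rw [e1, e2] at hw
          linarith
        refine le_trans ?_ h1
        rw [inv_mul_eq_div, div_le_div_iff₀ hB₁ hdpos]
        calc ‖u‖ ^ 2 * d ≤ ‖u‖ ^ 2 * (B₁ * ‖u‖ ^ 2) := by
              apply mul_le_mul_of_nonneg_left hd.2 (by positivity)
          _ = ‖u‖ ^ 2 * ‖u‖ ^ 2 * B₁ := by ring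
    · rw [ht]
      have h1 : (inner (𝕜 := ℂ) (S.symm u) u).re ≤ ‖S.symm u‖ * ‖u‖ :=
        re_inner_le_norm (𝕜 := ℂ) (S.symm u) u
      have h2 : ‖S.symm u‖ ≤ ‖(S.symm : H →L[ℂ] H)‖ * ‖u‖ := by
        have := (S.symm : H →L[ℂ] H).le_opNorm u
        simpa using this
      nlinarith [norm_nonneg u, norm_nonneg (S.symm : H →L[ℂ] H)]
  · intro u
    have hadj : ∀ j, ContinuousLinearMap.adjoint
        ((T j).comp ((P j).comp S.symm.toContinuousLinearMap))
        = (S.symm.toContinuousLinearMap.comp (P j)).comp (ContinuousLinearMap.adjoint (T j)) := by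
      intro j
      rw [ContinuousLinearMap.adjoint_comp, ContinuousLinearMap.adjoint_comp]
      have hPsa : ContinuousLinearMap.adjoint (P j) = P j :=
        ((ContinuousLinearMap.eq_adjoint_iff (P j) (P j)).2 (hP1 j)).symm
      have hSsa : ContinuousLinearMap.adjoint S.symm.toContinuousLinearMap
          = S.symm.toContinuousLinearMap :=
        ((ContinuousLinearMap.eq_adjoint_iff _ _).2 hsyminner).symm
      rw [hPsa, hSsa]
    have hterm : (fun j => (v j) ^ 2 • projOp ((N j).map S.symm.toContinuousLinearMap.toLinearMap)
        (ContinuousLinearMap.adjoint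
          ((T j).comp ((P j).comp S.symm.toContinuousLinearMap))
          (T j (P j (S.symm (projOp ((N j).map S.symm.toContinuousLinearMap.toLinearMap) u))))))
        = fun j => S.symm.toContinuousLinearMap
          ((v j) ^ 2 • P j (ContinuousLinearMap.adjoint (T j) (T j (P j (S.symm u))))) := by
      funext j
      rw [hK j u, hadj j]
      show (v j) ^ 2 • projOp ((N j).map S.symm.toContinuousLinearMap.toLinearMap)
          (S.symm (P j (ContinuousLinearMap.adjoint (T j) (T j (P j (S.symm u)))))) = _
      rw [hK2 j]
      rw [ContinuousLinearMap.map_smul_of_tower]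
      rfl
    rw [hterm]
    have h := (hS (S.symm u)).mapL S.symm.toContinuousLinearMap
    have he : S.symm.toContinuousLinearMap (S (S.symm u)) = S.symm u := by
      show S.symm (S (S.symm u)) = S.symm u
      rw [S.apply_symm_apply]
    rwa [he] at h


end Main

/-- Δ = {(S⁻¹(W_j⊕V_j), (Λ_j⊕Γ_j) P_{W_j⊕V_j} S⁻¹, v_j)} is a g-fusion frame
for H ⊕ X with lower bound B₁⁻¹, and its frame operator equals S⁻¹. -/
theorem stmt17 {ι E F : Type*} [NormedAddCommGroup E] [InnerProductSpace ℂ E] [CompleteSpace E]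
    [NormedAddCommGroup F] [InnerProductSpace ℂ F] [CompleteSpace F]
    {G X : ι → Type*} [∀ j, NormedAddCommGroup (G j)] [∀ j, InnerProductSpace ℂ (G j)]
    [∀ j, CompleteSpace (G j)] [∀ j, NormedAddCommGroup (X j)] [∀ j, InnerProductSpace ℂ (X j)]
    [∀ j, CompleteSpace (X j)]
    (W : ι → Submodule ℂ E) [∀ j, CompleteSpace (W j)]
    (Vs : ι → Submodule ℂ F) [∀ j, CompleteSpace (Vs j)]
    (v : ι → ℝ) (hv : ∀ j, 0 < v j)
    (Λ : ∀ j, E →L[ℂ] G j) (Γ : ∀ j, F →L[ℂ] X j)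
    (A₁ B₁ : ℝ) (hA₁ : 0 < A₁) (hAB : A₁ ≤ B₁)
    (hframe : ∀ u : WithLp 2 (E × F),
      Summable (fun j => (v j) ^ 2 *
        ‖oplus (Λ j) (Γ j) (oplus (proj (W j)) (proj (Vs j)) u)‖ ^ 2) ∧
      A₁ * ‖u‖ ^ 2 ≤
        ∑' j, (v j) ^ 2 * ‖oplus (Λ j) (Γ j) (oplus (proj (W j)) (proj (Vs j)) u)‖ ^ 2 ∧
      ∑' j, (v j) ^ 2 * ‖oplus (Λ j) (Γ j) (oplus (proj (W j)) (proj (Vs j)) u)‖ ^ 2 ≤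
        B₁ * ‖u‖ ^ 2)
    (S : WithLp 2 (E × F) ≃L[ℂ] WithLp 2 (E × F))
    (hS : ∀ u : WithLp 2 (E × F), HasSum
      (fun j => (v j) ^ 2 • oplus (proj (W j)) (proj (Vs j))
        (ContinuousLinearMap.adjoint (oplus (Λ j) (Γ j))
          (oplus (Λ j) (Γ j) (oplus (proj (W j)) (proj (Vs j)) u)))) (S u)) :
    (∃ B' > (0 : ℝ), ∀ u : WithLp 2 (E × F),
      Summable (fun j => (v j) ^ 2 *
        ‖oplus (Λ j) (Γ j) (oplus (proj (W j)) (proj (Vs j))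
          (S.symm (projOp ((prodSub (W j) (Vs j)).map S.symm.toContinuousLinearMap.toLinearMap) u)))‖ ^ 2) ∧
      B₁⁻¹ * ‖u‖ ^ 2 ≤
        ∑' j, (v j) ^ 2 *
          ‖oplus (Λ j) (Γ j) (oplus (proj (W j)) (proj (Vs j))
            (S.symm (projOp ((prodSub (W j) (Vs j)).map S.symm.toContinuousLinearMap.toLinearMap) u)))‖ ^ 2 ∧
      ∑' j, (v j) ^ 2 *
          ‖oplus (Λ j) (Γ j) (oplus (proj (W j)) (proj (Vs j))
            (S.symm (projOp ((prodSub (W j) (Vs j)).map S.symm.toContinuousLinearMap.toLinearMap) u)))‖ ^ 2 ≤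
        B' * ‖u‖ ^ 2) ∧
    ∀ u : WithLp 2 (E × F), HasSum
      (fun j => (v j) ^ 2 •
        projOp ((prodSub (W j) (Vs j)).map S.symm.toContinuousLinearMap.toLinearMap)
          (ContinuousLinearMap.adjoint
            ((oplus (Λ j) (Γ j)).comp ((oplus (proj (W j)) (proj (Vs j))).comp
              S.symm.toContinuousLinearMap))
            ((oplus (Λ j) (Γ j)) (oplus (proj (W j)) (proj (Vs j))
              (S.symm (projOp ((prodSub (W j) (Vs j)).map S.symm.toContinuousLinearMap.toLinearMap) u))))))
      (S.symm u) := by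
  exact gfd_main v (fun j => oplus (Λ j) (Γ j))
    (fun j => oplus (_root_.proj (W j)) (_root_.proj (Vs j)))
    (fun j => prodSub (W j) (Vs j))
    (fun j => gfd_inner_P (W j) (Vs j))
    (fun j => gfd_P_mem (W j) (Vs j))
    (fun j u h => gfd_P_zero (W j) (Vs j) h)
    (fun j => gfd_prodSub_isClosed (W j) (Vs j))
    A₁ B₁ hA₁ hAB hframe S hS
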